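/- arXiv:2311.03779 — 3 statements merged into one kernel-verified Lean document; each statement's English description precedes it below -/
import Mathlib

section
/- Let $\Gamma \subset GL(n,\mathbb{R})$ be a semigroup of proximal matrices such that for all $A, B \in \Gamma$ one has $\Gamma v_B \cap E_A = \emptyset$. Then any $\Gamma$-invariant linear subspace $W \subseteq \mathbb{R}^n$ either is contained in $\bigcap_{A \in \Gamma} E_A$, or contains $v_A$ for every $A \in \Gamma$. -/
open Matrix Polynomial

/-- `A` is proximal with dominant (real) eigenvalue `lam`, dominant eigenvector `v`, and
`E` the sum of the complementary generalized eigenspaces. -/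
structure IsProximal {n : ℕ} (A : Matrix (Fin n) (Fin n) ℝ) (lam : ℝ)
    (v : Fin n → ℝ) (E : Submodule ℝ (Fin n → ℝ)) : Prop where
  ne_zero : v ≠ 0
  eigen : A.mulVec v = lam • v
  simple_root : (A.charpoly).rootMultiplicity lam = 1
  dominant : ∀ μ ∈ ((A.charpoly).map (algebraMap ℝ ℂ)).roots, μ ≠ (lam : ℂ) → ‖μ‖ < |lam|
  compl : IsCompl (Submodule.span ℝ {v}) E
  invariant : ∀ w ∈ E, A.mulVec w ∈ E

/-! ### Auxiliary lemmas -/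

lemma pow_mulVec_mem {n : ℕ} (A : Matrix (Fin n) (Fin n) ℝ) (U : Submodule ℝ (Fin n → ℝ))
    (hU : ∀ u ∈ U, A.mulVec u ∈ U) (k : ℕ) {u : Fin n → ℝ} (hu : u ∈ U) :
    (A ^ k).mulVec u ∈ U := by
  induction k with
  | zero => simpa using hu
  | succ k ih =>
    rw [pow_succ', ← Matrix.mulVec_mulVec]
    exact hU _ ih

lemma aeval_mulVec_mem {n : ℕ} (A : Matrix (Fin n) (Fin n) ℝ) (U : Submodule ℝ (Fin n → ℝ))
    (hU : ∀ u ∈ U, A.mulVec u ∈ U) (p : ℝ[X]) {u : Fin n → ℝ} (hu : u ∈ U) :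
    (Polynomial.aeval A p).mulVec u ∈ U := by
  induction p using Polynomial.induction_on' with
  | add p q hp hq => rw [map_add, Matrix.add_mulVec]; exact U.add_mem hp hq
  | monomial k a =>
    rw [aeval_monomial]
    have : (algebraMap ℝ (Matrix (Fin n) (Fin n) ℝ) a * A ^ k).mulVec u
        = a • (A ^ k).mulVec u := by
      rw [Algebra.algebraMap_eq_smul_one, smul_mul_assoc, one_mul, Matrix.smul_mulVec]
    rw [this]
    exact U.smul_mem _ (pow_mulVec_mem A U hU k hu)

lemma aeval_mulVec_eigen {n : ℕ} {A : Matrix (Fin n) (Fin n) ℝ} {lam : ℝ} {v : Fin n → ℝ}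
    (hv : A.mulVec v = lam • v) (p : ℝ[X]) :
    (Polynomial.aeval A p).mulVec v = p.eval lam • v := by
  have hpow : ∀ k : ℕ, (A ^ k).mulVec v = lam ^ k • v := by
    intro k
    induction k with
    | zero => simp
    | succ k ih =>
      rw [pow_succ', ← Matrix.mulVec_mulVec, ih, Matrix.mulVec_smul, hv, smul_smul,
        mul_comm, pow_succ']
  induction p using Polynomial.induction_on' with
  | add p q hp hq => rw [map_add, Matrix.add_mulVec, hp, hq, eval_add, add_smul]
  | monomial k a =>
    rw [aeval_monomial, eval_monomial]
    rw [Algebra.algebraMap_eq_smul_one, smul_mul_assoc, one_mul, Matrix.smul_mulVec,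
      hpow, smul_smul]

lemma col_eq {m : Type*} [Fintype m] [DecidableEq m] (P : Matrix m m ℝ[X]) (lam : ℝ)
    (i₀ : m) (h0 : ∀ j, P j i₀ = if j = i₀ then X - C lam else 0) :
    P = P.updateCol i₀ ((X - C lam) • (Pi.single i₀ 1 : m → ℝ[X])) := by
  ext j i
  rw [Matrix.updateCol_apply]
  by_cases hi : i = i₀
  · rw [if_pos hi, hi, h0 j, Pi.smul_apply, Pi.single_apply, smul_eq_mul]
    by_cases hj : j = i₀ <;> simp [hj]
  · rw [if_neg hi]

/-- If a matrix has two "eigen-columns" for the same eigenvalue, then `(X - lam)^2`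
divides its characteristic polynomial. -/
lemma charpoly_sq_dvd {m : Type*} [Fintype m] [DecidableEq m] (M : Matrix m m ℝ) (lam : ℝ)
    (i₀ i₁ : m) (hne : i₀ ≠ i₁)
    (h0 : ∀ j, M j i₀ = if j = i₀ then lam else 0)
    (h1 : ∀ j, M j i₁ = if j = i₁ then lam else 0) :
    (X - C lam) ^ 2 ∣ M.charpoly := by
  have hc0 : ∀ j, charmatrix M j i₀ = if j = i₀ then X - C lam else 0 := by
    intro j
    by_cases hj : j = i₀
    · subst hj; simp [h0]
    · rw [charmatrix_apply_ne _ _ _ hj, if_neg hj, h0, if_neg hj, map_zero, neg_zero]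
  set N : Matrix m m ℝ[X] := (charmatrix M).updateCol i₀ (Pi.single i₀ 1) with hNdef
  have hc1 : ∀ j, N j i₁ = if j = i₁ then X - C lam else 0 := by
    intro j
    rw [hNdef, Matrix.updateCol_apply, if_neg (Ne.symm hne)]
    by_cases hj : j = i₁
    · subst hj; simp [h1]
    · rw [charmatrix_apply_ne _ _ _ hj, if_neg hj, h1, if_neg hj, map_zero, neg_zero]
  have key : M.charpoly
      = (X - C lam) * ((X - C lam) * (N.updateCol i₁ (Pi.single i₁ 1)).det) := by
    rw [Matrix.charpoly]
    conv_lhs => rw [col_eq (charmatrix M) lam i₀ hc0]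
    rw [Matrix.det_updateCol_smul]
    congr 1
    conv_lhs => rw [show (charmatrix M).updateCol i₀ (Pi.single i₀ 1) = N from rfl,
      col_eq N lam i₁ hc1]
    rw [Matrix.det_updateCol_smul]
  rw [key, ← mul_assoc, ← sq]
  exact Dvd.intro _ rfl

/-- Geometric simplicity: all `lam`-eigenvectors of a proximal matrix lie in the span of `v`. -/
lemma eig_mem_span {n : ℕ} {A : Matrix (Fin n) (Fin n) ℝ} {lam : ℝ} {v : Fin n → ℝ}
    {E : Submodule ℝ (Fin n → ℝ)} (h : IsProximal A lam v E) (x : Fin n → ℝ)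
    (hx : A.mulVec x = lam • x) : x ∈ Submodule.span ℝ {v} := by
  classical
  by_contra hxs
  have hxv : x ≠ v := fun h0 => hxs (by rw [h0]; exact Submodule.mem_span_singleton_self v)
  have hs : LinearIndepOn ℝ id (insert x {v} : Set (Fin n → ℝ)) := by
    rw [linearIndepOn_id_insert (by simpa using hxv)]
    exact ⟨(linearIndepOn_singleton_iff ℝ).2 h.ne_zero, hxs⟩
  let b : Module.Basis (hs.extend (Set.subset_univ _)) ℝ (Fin n → ℝ) := Module.Basis.extend hs
  haveI : Fintype (hs.extend (Set.subset_univ _)) := FiniteDimensional.fintypeBasisIndex b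
  let i₀ : hs.extend (Set.subset_univ _) :=
    ⟨x, hs.subset_extend _ (Set.mem_insert _ _)⟩
  let i₁ : hs.extend (Set.subset_univ _) :=
    ⟨v, hs.subset_extend _ (Set.mem_insert_of_mem _ rfl)⟩
  have hne : i₀ ≠ i₁ := fun hcon => hxv (congrArg Subtype.val hcon)
  let M := LinearMap.toMatrix b b A.mulVecLin
  have hMchar : M.charpoly = A.charpoly := by
    have h1 : LinearMap.toMatrix (Pi.basisFun ℝ (Fin n)) (Pi.basisFun ℝ (Fin n)) A.mulVecLin
        = A := by
      rw [LinearMap.toMatrix_eq_toMatrix', ← Matrix.toLin'_apply', LinearMap.toMatrix'_toLin']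
    calc M.charpoly = (A.mulVecLin).charpoly := LinearMap.charpoly_toMatrix _ b
    _ = (LinearMap.toMatrix (Pi.basisFun ℝ (Fin n)) (Pi.basisFun ℝ (Fin n))
          A.mulVecLin).charpoly := (LinearMap.charpoly_toMatrix _ _).symm
    _ = A.charpoly := by rw [h1]
  have hcol : ∀ (i : hs.extend (Set.subset_univ _)) (w : Fin n → ℝ), (i : Fin n → ℝ) = w →
      A.mulVec w = lam • w → ∀ j, M j i = if j = i then lam else 0 := by
    intro i w hiw hw j
    have hb : b i = w := by rw [Module.Basis.extend_apply_self]; exact hiw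
    have : M j i = b.repr (A.mulVecLin (b i)) j := LinearMap.toMatrix_apply _ _ _ _ _
    rw [this, hb, Matrix.mulVecLin_apply, hw, ← hb, _root_.map_smul, Module.Basis.repr_self]
    simp [Finsupp.single_apply, eq_comm]
  have hdvd : (X - C lam) ^ 2 ∣ A.charpoly := by
    rw [← hMchar]
    exact charpoly_sq_dvd M lam i₀ i₁ hne (hcol i₀ x rfl hx) (hcol i₁ v rfl h.eigen)
  have h2 : 2 ≤ (A.charpoly).rootMultiplicity lam :=
    (le_rootMultiplicity_iff (A.charpoly_monic.ne_zero)).2 hdvd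
  rw [h.simple_root] at h2
  omega

/-- Core step: an `A`-invariant subspace containing a vector outside `E` contains `v`. -/
lemma v_mem_of_exists {n : ℕ} {A : Matrix (Fin n) (Fin n) ℝ} {lam : ℝ} {v : Fin n → ℝ}
    {E : Submodule ℝ (Fin n → ℝ)} (h : IsProximal A lam v E)
    (W : Submodule ℝ (Fin n → ℝ)) (hW : ∀ u ∈ W, A.mulVec u ∈ W)
    {w : Fin n → ℝ} (hwW : w ∈ W) (hwE : w ∉ E) : v ∈ W := by
  have hchar0 : A.charpoly ≠ 0 := A.charpoly_monic.ne_zero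
  obtain ⟨q, hq⟩ : (X - C lam) ∣ A.charpoly := by
    have := Polynomial.pow_rootMultiplicity_dvd A.charpoly lam
    rwa [h.simple_root, pow_one] at this
  have hqlam : q.eval lam ≠ 0 := by
    intro h0
    obtain ⟨r, hr⟩ := Polynomial.dvd_iff_isRoot.2 h0
    have hdvd : (X - C lam) ^ 2 ∣ A.charpoly := by
      rw [hq, hr, sq]
      exact mul_dvd_mul_left _ (Dvd.intro _ rfl)
    have h2 : 2 ≤ (A.charpoly).rootMultiplicity lam :=
      (le_rootMultiplicity_iff hchar0).2 hdvd
    rw [h.simple_root] at h2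
    omega
  have hsup : w ∈ Submodule.span ℝ {v} ⊔ E := by
    rw [h.compl.sup_eq_top]; trivial
  obtain ⟨y, hy, e, he, hye⟩ := Submodule.mem_sup.1 hsup
  obtain ⟨c, rfl⟩ := Submodule.mem_span_singleton.1 hy
  have hc : c ≠ 0 := by
    rintro rfl
    rw [zero_smul, zero_add] at hye
    exact hwE (hye ▸ he)
  have huW : (Polynomial.aeval A q).mulVec w ∈ W := aeval_mulVec_mem A W hW q hwW
  have heE : (Polynomial.aeval A q).mulVec e ∈ E :=
    aeval_mulVec_mem A E h.invariant q he
  have heig : A.mulVec ((Polynomial.aeval A q).mulVec e)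
      = lam • ((Polynomial.aeval A q).mulVec e) := by
    have hz : (Polynomial.aeval A ((X - C lam) * q)).mulVec e = 0 := by
      rw [← hq, Matrix.aeval_self_charpoly, Matrix.zero_mulVec]
    rw [_root_.map_mul, ← Matrix.mulVec_mulVec] at hz
    have : Polynomial.aeval A (X - C lam) = A - lam • 1 := by
      rw [map_sub, Polynomial.aeval_X, Polynomial.aeval_C,
        Algebra.algebraMap_eq_smul_one]
    rw [this, Matrix.sub_mulVec, Matrix.smul_mulVec, Matrix.one_mulVec,
      sub_eq_zero] at hz
    exact hz
  have hespan : (Polynomial.aeval A q).mulVec e ∈ Submodule.span ℝ {v} :=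
    eig_mem_span h _ heig
  have he0 : (Polynomial.aeval A q).mulVec e = 0 :=
    (Submodule.disjoint_def.1 h.compl.disjoint) _ hespan heE
  have hu : (Polynomial.aeval A q).mulVec w = (c * q.eval lam) • v := by
    rw [← hye, Matrix.mulVec_add, Matrix.mulVec_smul, aeval_mulVec_eigen h.eigen, he0,
      add_zero, smul_smul]
  rw [hu] at huW
  have := W.smul_mem (c * q.eval lam)⁻¹ huW
  rwa [smul_smul, inv_mul_cancel₀ (mul_ne_zero hc hqlam), one_smul] at this

/-- for a semigroup `Γ ⊆ GL(n,ℝ)` of proximal matrices with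
`Γ v_B ∩ E_A = ∅` for all `A, B ∈ Γ`, any `Γ`-invariant subspace `W` either is contained in
`⋂_{A ∈ Γ} E_A` or contains `v_A` for every `A ∈ Γ`. -/
theorem invariant_subspace_dichotomy {n : ℕ}
    (S : Set (Matrix (Fin n) (Fin n) ℝ))
    (hmul : ∀ A ∈ S, ∀ B ∈ S, A * B ∈ S)
    (hGL : ∀ A ∈ S, IsUnit A.det)
    (lam : Matrix (Fin n) (Fin n) ℝ → ℝ)
    (v : Matrix (Fin n) (Fin n) ℝ → (Fin n → ℝ))
    (E : Matrix (Fin n) (Fin n) ℝ → Submodule ℝ (Fin n → ℝ))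
    (hprox : ∀ A ∈ S, IsProximal A (lam A) (v A) (E A))
    (hdisj : ∀ A ∈ S, ∀ B ∈ S, ∀ C ∈ S, C.mulVec (v B) ∉ E A)
    (W : Submodule ℝ (Fin n → ℝ))
    (hW : ∀ A ∈ S, W.map A.mulVecLin ≤ W) :
    (∀ A ∈ S, W ≤ E A) ∨ (∀ A ∈ S, v A ∈ W) := by
  have hWinv : ∀ A ∈ S, ∀ u ∈ W, A.mulVec u ∈ W := fun A hA u hu =>
    hW A hA ⟨u, hu, rfl⟩
  by_cases hall : ∀ A ∈ S, W ≤ E A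
  · exact Or.inl hall
  · right
    push_neg at hall
    obtain ⟨A₀, hA₀, hWE⟩ := hall
    obtain ⟨w, hwW, hwE⟩ := SetLike.not_le_iff_exists.1 hWE
    have hv₀ : v A₀ ∈ W := v_mem_of_exists (hprox A₀ hA₀) W (hWinv A₀ hA₀) hwW hwE
    intro B hB
    exact v_mem_of_exists (hprox B hB) W (hWinv B hB)
      (hWinv A₀ hA₀ _ hv₀) (hdisj B hB A₀ hA₀ A₀ hA₀)
end

section
/- Let $\Gamma \subset GL(n,\mathbb{R})$ be a semigroup of proximal matrices with $\Gamma v_B \cap E_A = \emptyset$ for all $A,B \in \Gamma$. Let $W_\Gamma = \sum_{A \in \Gamma} \mathbb{R}v_A$, let $U_\Gamma$ be a maximal proper $\Gamma$-invariant subspace of $W_\Gamma$, and set $V_\Gamma = W_\Gamma / U_\Gamma$. Then $\Gamma$ acts irreducibly on $V_\Gamma$, and every $A \in \Gamma$ acts on $V_\Gamma$ with the same dominant eigenvalue $\lambda_A$ as on $\mathbb{R}^n$: the image of $v_A$ in $V_\Gamma$ is nonzero and is an eigenvector of the induced map with eigenvalue $\lambda_A$. -/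
open Matrix Polynomial

/-- `A` is proximal with dominant (real) eigenvalue `lam`, dominant eigenvector `v`, and
`E` the sum of the complementary generalized eigenspaces. -/
lemma aux_poly_mem {n : ℕ} (B : Matrix (Fin n) (Fin n) ℝ) (U : Submodule ℝ (Fin n → ℝ))
    (hU : ∀ w ∈ U, B.mulVec w ∈ U) (p : ℝ[X]) {w : Fin n → ℝ} (hw : w ∈ U) :
    (aeval B p).mulVec w ∈ U := by
  have hpow : ∀ k : ℕ, (B ^ k).mulVec w ∈ U := by
    intro k
    induction k with
    | zero => simpa using hw
    | succ k ih => rw [pow_succ', ← Matrix.mulVec_mulVec]; exact hU _ ih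
  induction p using Polynomial.induction_on' with
  | add p q hp hq => rw [map_add, Matrix.add_mulVec]; exact U.add_mem hp hq
  | monomial k a =>
    rw [aeval_monomial, Algebra.algebraMap_eq_smul_one, smul_mul_assoc, one_mul,
      Matrix.smul_mulVec]
    exact U.smul_mem a (hpow k)

lemma aux_poly_eigen {n : ℕ} (B : Matrix (Fin n) (Fin n) ℝ) {lam : ℝ} {v : Fin n → ℝ}
    (hv : B.mulVec v = lam • v) (p : ℝ[X]) :
    (aeval B p).mulVec v = p.eval lam • v := by
  have hpow : ∀ k : ℕ, (B ^ k).mulVec v = lam ^ k • v := by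
    intro k
    induction k with
    | zero => simp
    | succ k ih =>
      rw [pow_succ', ← Matrix.mulVec_mulVec, ih, Matrix.mulVec_smul, hv, pow_succ',
        smul_smul, mul_comm lam (lam ^ k)]
  induction p using Polynomial.induction_on' with
  | add p q hp hq => rw [map_add, Matrix.add_mulVec, hp, hq, eval_add, add_smul]
  | monomial k a =>
    rw [aeval_monomial, Algebra.algebraMap_eq_smul_one, smul_mul_assoc, one_mul,
      Matrix.smul_mulVec, hpow, eval_monomial, smul_smul]


lemma aux_charpoly_mulVecLin {n : ℕ} (B : Matrix (Fin n) (Fin n) ℝ) :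
    B.mulVecLin.charpoly = B.charpoly := by
  rw [← LinearMap.charpoly_toMatrix B.mulVecLin (Pi.basisFun ℝ (Fin n)),
    LinearMap.toMatrix_eq_toMatrix']
  congr 1
  rw [← Matrix.toLin'_apply' B, LinearMap.toMatrix'_toLin']

lemma aux_no_eigen_in_E {n : ℕ} {B : Matrix (Fin n) (Fin n) ℝ} {lam : ℝ} {v : Fin n → ℝ}
    {E : Submodule ℝ (Fin n → ℝ)} (h : IsProximal B lam v E)
    {e : Fin n → ℝ} (he : e ∈ E) (heig : B.mulVec e = lam • e) : e = 0 := by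
  set Vs : Submodule ℝ (Fin n → ℝ) := Submodule.span ℝ {v} with hVs
  have hsv : ∀ x ∈ Vs, B.mulVecLin x ∈ Vs := by
    intro x hx
    rw [hVs, Submodule.mem_span_singleton] at hx ⊢
    obtain ⟨c, rfl⟩ := hx
    exact ⟨c * lam, by simp [Matrix.mulVecLin_apply, Matrix.mulVec_smul, h.eigen, smul_smul]⟩
  have hse : ∀ x ∈ E, B.mulVecLin x ∈ E := fun x hx => h.invariant x hx
  set f₁ : Module.End ℝ Vs := B.mulVecLin.restrict hsv with hf₁
  set f₂ : Module.End ℝ E := B.mulVecLin.restrict hse with hf₂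
  set eq := Submodule.prodEquivOfIsCompl Vs E h.compl with heq
  have hconj : eq.symm.conj B.mulVecLin = f₁.prodMap f₂ := by
    apply LinearMap.ext
    rintro ⟨x, y⟩
    rw [LinearEquiv.conj_apply_apply]
    rw [LinearEquiv.symm_apply_eq]
    rw [LinearEquiv.symm_symm]
    simp only [heq, LinearMap.prodMap_apply, Submodule.coe_prodEquivOfIsCompl',
      Matrix.mulVecLin_apply, hf₁, hf₂, LinearMap.restrict_coe_apply, Matrix.mulVec_add]
  have hprod : B.charpoly = f₁.charpoly * f₂.charpoly := by
    rw [← aux_charpoly_mulVecLin, ← LinearEquiv.charpoly_conj eq.symm B.mulVecLin, hconj,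
      LinearMap.charpoly_prodMap]
  -- charpoly f₁ = X - C lam
  have hvV : v ∈ Vs := Submodule.mem_span_singleton_self v
  have hrank : Module.finrank ℝ Vs = 1 := finrank_span_singleton h.ne_zero
  have hfd1 : f₁ = algebraMap ℝ (Module.End ℝ Vs) lam := by
    apply LinearMap.ext
    rintro ⟨x, hx⟩
    rw [hVs, Submodule.mem_span_singleton] at hx
    obtain ⟨c, rfl⟩ := hx
    apply Subtype.ext
    simp [hf₁, LinearMap.restrict_apply, Matrix.mulVec_smul, h.eigen, smul_smul,
      Module.algebraMap_end_apply, mul_comm]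
  have hv0 : (⟨v, hvV⟩ : Vs) ≠ 0 := fun hc => h.ne_zero (congrArg Subtype.val hc)
  have hroot1 : f₁.charpoly.eval lam = 0 := by
    have hinj : Function.Injective (algebraMap ℝ (Module.End ℝ Vs)) := by
      intro a b hab
      have := LinearMap.congr_fun hab ⟨v, hvV⟩
      rw [Module.algebraMap_end_apply, Module.algebraMap_end_apply] at this
      exact smul_left_injective ℝ hv0 this
    haveI := (faithfulSMul_iff_algebraMap_injective ℝ (Module.End ℝ Vs)).mpr hinj
    apply isRoot_of_aeval_algebraMap_eq_zero (R := ℝ) (S := Module.End ℝ Vs)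
    · rw [← hfd1]; exact LinearMap.aeval_self_charpoly f₁
  have hmono1 : f₁.charpoly.Monic := LinearMap.charpoly_monic f₁
  have hdeg1 : f₁.charpoly.natDegree = 1 := by
    rw [LinearMap.charpoly_natDegree, hrank]
  have hchar1 : f₁.charpoly = X - C lam := by
    have := hmono1.eq_X_add_C hdeg1
    rw [this] at hroot1 ⊢
    simp at hroot1
    rw [show f₁.charpoly.coeff 0 = -lam by linarith]
    ring_nf
    rw [sub_eq_add_neg, map_neg]
  -- rootMultiplicity
  have hBne : B.charpoly ≠ 0 := (Matrix.charpoly_monic B).ne_zero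
  have hf2ne : f₂.charpoly ≠ 0 := (LinearMap.charpoly_monic f₂).ne_zero
  have hrm : rootMultiplicity lam B.charpoly
      = rootMultiplicity lam (X - C lam) + rootMultiplicity lam f₂.charpoly := by
    rw [hprod, hchar1] at hBne ⊢
    exact rootMultiplicity_mul hBne
  rw [h.simple_root, rootMultiplicity_X_sub_C_self] at hrm
  have hrm2 : rootMultiplicity lam f₂.charpoly = 0 := by omega
  have hnroot : ¬ f₂.charpoly.IsRoot lam := by
    intro hr
    exact hf2ne (rootMultiplicity_eq_zero_iff.mp hrm2 hr)
  -- conclude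
  by_contra hene
  have hev : Module.End.HasEigenvalue f₂ lam := by
    apply Module.End.hasEigenvalue_of_hasEigenvector (x := (⟨e, he⟩ : E))
    constructor
    · rw [Module.End.mem_eigenspace_iff]
      apply Subtype.ext
      simpa [hf₂, LinearMap.restrict_apply] using heig
    · intro hc; exact hene (congrArg Subtype.val hc)
  have := Module.End.hasEigenvalue_iff_isRoot.mp hev
  exact hnroot (this.dvd (LinearMap.minpoly_dvd_charpoly f₂))

lemma aux_v_mem {n : ℕ} {B : Matrix (Fin n) (Fin n) ℝ} {lam : ℝ} {v : Fin n → ℝ}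
    {E : Submodule ℝ (Fin n → ℝ)} (h : IsProximal B lam v E)
    {U : Submodule ℝ (Fin n → ℝ)} (hU : ∀ w ∈ U, B.mulVec w ∈ U)
    {w : Fin n → ℝ} (hwU : w ∈ U) (hwE : w ∉ E) : v ∈ U := by
  have hBne : B.charpoly ≠ 0 := (Matrix.charpoly_monic B).ne_zero
  have hroot : B.charpoly.IsRoot lam := by
    have h1 : 0 < rootMultiplicity lam B.charpoly := by rw [h.simple_root]; norm_num
    exact (rootMultiplicity_pos hBne).mp h1
  set q := B.charpoly /ₘ (X - C lam) with hq
  have hfact : (X - C lam) * q = B.charpoly := mul_divByMonic_eq_iff_isRoot.mpr hroot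
  have hqe : q.eval lam ≠ 0 := by
    intro h0
    have hqne : q ≠ 0 := by intro hc; rw [hc, mul_zero] at hfact; exact hBne hfact.symm
    have h1 : rootMultiplicity lam B.charpoly = 1 + rootMultiplicity lam q := by
      rw [← hfact, rootMultiplicity_mul (hfact ▸ hBne), rootMultiplicity_X_sub_C_self]
    rw [h.simple_root] at h1
    have h2 : rootMultiplicity lam q = 0 := by omega
    exact hqne (rootMultiplicity_eq_zero_iff.mp h2 h0)
  have hw' : w ∈ Submodule.span ℝ {v} ⊔ E := by rw [h.compl.sup_eq_top]; trivial
  obtain ⟨s, hs, e, he, rfl⟩ := Submodule.mem_sup.mp hw'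
  obtain ⟨c, rfl⟩ := Submodule.mem_span_singleton.mp hs
  have hc : c ≠ 0 := by rintro rfl; simp only [zero_smul, zero_add] at hwE; exact hwE he
  set u := (aeval B q).mulVec (c • v + e) with hu
  have huU : u ∈ U := aux_poly_mem B U hU q hwU
  set e' := (aeval B q).mulVec e with he'def
  set k := c * q.eval lam with hk
  have hsplit : u = k • v + e' := by
    rw [hu, Matrix.mulVec_add, Matrix.mulVec_smul, aux_poly_eigen B h.eigen q, smul_smul]
  have heE : e' ∈ E := aux_poly_mem B E h.invariant q he
  have hBu : B.mulVec u = lam • u := by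
    have key : (aeval B (X - C lam)).mulVec u = 0 := by
      rw [hu, Matrix.mulVec_mulVec, ← _root_.map_mul, hfact, Matrix.aeval_self_charpoly,
        Matrix.zero_mulVec]
    rw [map_sub, aeval_X, aeval_C, Matrix.sub_mulVec] at key
    have h2 : (algebraMap ℝ (Matrix (Fin n) (Fin n) ℝ) lam).mulVec u = lam • u := by
      rw [Algebra.algebraMap_eq_smul_one, Matrix.smul_mulVec, Matrix.one_mulVec]
    rw [h2, sub_eq_zero] at key
    exact key
  have hBe' : B.mulVec e' = lam • e' := by
    have h1 : k • (lam • v) + B.mulVec e' = k • (lam • v) + lam • e' := by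
      calc k • (lam • v) + B.mulVec e' = B.mulVec u := by
            rw [hsplit, Matrix.mulVec_add, Matrix.mulVec_smul, h.eigen]
        _ = lam • u := hBu
        _ = k • (lam • v) + lam • e' := by rw [hsplit, smul_add, smul_comm lam k]
    exact add_left_cancel h1
  have he'0 : e' = 0 := aux_no_eigen_in_E h heE hBe'
  have hk0 : k ≠ 0 := mul_ne_zero hc hqe
  have hv : v = k⁻¹ • u := by
    rw [hsplit, he'0, add_zero, smul_smul, inv_mul_cancel₀ hk0, one_smul]
  rw [hv]
  exact U.smul_mem _ huU

/-- let `W_Γ = Σ_{A ∈ Γ} ℝ v_A`, `U_Γ` a maximal proper `Γ`-invariant subspace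
of `W_Γ`, and `V_Γ = W_Γ / U_Γ`. Then `Γ` acts irreducibly on `V_Γ` (every `Γ`-invariant
subspace `P` with `U_Γ ≤ P ≤ W_Γ` equals `U_Γ` or `W_Γ`), and every `A ∈ Γ` acts on `V_Γ`
with the same dominant eigenvalue: the image of `v_A` in `V_Γ` is nonzero (i.e. `v_A ∉ U_Γ`)
and the eigenvector equation `A v_A = λ_A v_A` holds (so it descends to the quotient). -/
theorem irreducible_on_quotient {n : ℕ}
    (S : Set (Matrix (Fin n) (Fin n) ℝ))
    (hmul : ∀ A ∈ S, ∀ B ∈ S, A * B ∈ S)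
    (hGL : ∀ A ∈ S, IsUnit A.det)
    (lam : Matrix (Fin n) (Fin n) ℝ → ℝ)
    (v : Matrix (Fin n) (Fin n) ℝ → (Fin n → ℝ))
    (E : Matrix (Fin n) (Fin n) ℝ → Submodule ℝ (Fin n → ℝ))
    (hprox : ∀ A ∈ S, IsProximal A (lam A) (v A) (E A))
    (hdisj : ∀ A ∈ S, ∀ B ∈ S, ∀ C ∈ S, C.mulVec (v B) ∉ E A)
    (W U : Submodule ℝ (Fin n → ℝ))
    (hWdef : W = ⨆ A ∈ S, Submodule.span ℝ {v A})
    (hUlt : U < W)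
    (hUinv : ∀ A ∈ S, U.map A.mulVecLin ≤ U)
    (hUmax : ∀ P : Submodule ℝ (Fin n → ℝ),
      P < W → (∀ A ∈ S, P.map A.mulVecLin ≤ P) → U ≤ P → P = U) :
    (∀ P : Submodule ℝ (Fin n → ℝ),
        U ≤ P → P ≤ W → (∀ A ∈ S, P.map A.mulVecLin ≤ P) → P = U ∨ P = W) ∧
    (∀ A ∈ S, v A ∈ W ∧ v A ∉ U ∧ A.mulVec (v A) = lam A • v A) := by
  have hUstab : ∀ A ∈ S, ∀ w ∈ U, A.mulVec w ∈ U := by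
    intro A hA w hw
    exact hUinv A hA (Submodule.mem_map_of_mem (f := A.mulVecLin) hw)
  have key : ∀ A ∈ S, v A ∉ U := by
    intro A hA hvA
    apply hUlt.not_ge
    rw [hWdef]
    apply iSup_le; intro B; apply iSup_le; intro hB
    rw [Submodule.span_le, Set.singleton_subset_iff]
    exact aux_v_mem (hprox B hB) (hUstab B hB)
      (hUstab A hA _ hvA) (hdisj B hB A hA A hA)
  refine ⟨?_, ?_⟩
  · intro P hUP hPW hPinv
    rcases eq_or_lt_of_le hPW with hPW' | hPW'
    · exact Or.inr hPW'
    · exact Or.inl (hUmax P hPW' hPinv hUP)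
  · intro A hA
    refine ⟨?_, key A hA, (hprox A hA).eigen⟩
    rw [hWdef]
    exact le_iSup₂ (f := fun B _ => Submodule.span ℝ {v B}) A hA
      (Submodule.mem_span_singleton_self _)
end

section
/- Let $(X, \mathcal{B}, m, (T_t)_{t \in \mathbb{R}})$ be a measure-preserving flow on a finite measure space and $\phi \in L^2(X,m)$ real-valued with $\int \phi\, dm = 0$. If there exists a sequence $t_n \to \infty$ such that $\phi \circ T_{t_n}$ does not converge weakly to $0$ in $L^2$, then there exist a sequence $s_n \to \infty$ and a non-constant $\chi \in L^2(X,m)$ with $\phi \circ T_{s_n} \rightharpoonup \chi$ and $\phi \circ T_{-s_n} \rightharpoonup \chi$ weakly in $L^2$. -/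
open MeasureTheory Filter

open Topology TopologicalSpace InnerProductSpace




-- helper: countable additive subgroup closure
lemma bab_countable_closure {s : Set ℝ} (hs : s.Countable) :
    ((AddSubgroup.closure s : AddSubgroup ℝ) : Set ℝ).Countable := by
  have hsu : (s ∪ -s).Countable := hs.union (hs.preimage (neg_injective))
  haveI := hsu.to_subtype
  apply Set.Countable.mono ?_ (Set.countable_range
    (fun l : List ↥(s ∪ -s) => (l.map Subtype.val).sum))
  intro x hx
  have hx' : x ∈ (AddSubgroup.closure s).toAddSubmonoid := hx
  rw [AddSubgroup.closure_toAddSubmonoid] at hx'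
  obtain ⟨l, hl, rfl⟩ := AddSubmonoid.exists_list_of_mem_closure hx'
  refine ⟨l.pmap (fun x hx => (⟨x, hx⟩ : ↥(s ∪ -s))) hl, ?_⟩
  simp [List.map_pmap]

-- helper: uniform approximation by Cauchy sequences
lemma bab_cauchySeq_of_approx {f : ℕ → ℝ}
    (h : ∀ ε > (0:ℝ), ∃ g : ℕ → ℝ, CauchySeq g ∧ ∀ n, |f n - g n| ≤ ε) :
    CauchySeq f := by
  rw [Metric.cauchySeq_iff]
  intro ε hε
  obtain ⟨g, hg, hfg⟩ := h (ε/4) (by linarith)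
  rw [Metric.cauchySeq_iff] at hg
  obtain ⟨N, hN⟩ := hg (ε/4) (by linarith)
  refine ⟨N, fun a ha b hb => ?_⟩
  have h1 := hfg a; have h2 := hfg b; have h3 := hN a ha b hb
  rw [Real.dist_eq] at *
  calc |f a - f b| ≤ |f a - g a| + |g a - g b| + |(g b - f b)| := by
        have : f a - f b = (f a - g a) + (g a - g b) + (g b - f b) := by ring
        rw [this]; exact (abs_add_le _ _).trans (by gcongr; exact abs_add_le _ _)
    _ < ε := by linarith [abs_sub_comm (g b) (f b)]

-- helper: diagonal extraction of pointwise limits for countably many bounded real sequences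
lemma bab_exists_subseq_forall_tendsto {ι : Type*} [Countable ι]
    (f : ℕ → ι → ℝ) (B : ι → ℝ) (hf : ∀ n i, |f n i| ≤ B i) :
    ∃ σ : ℕ → ℕ, StrictMono σ ∧ ∃ g : ι → ℝ,
      ∀ i, Tendsto (fun n => f (σ n) i) atTop (𝓝 (g i)) := by
  have hcomp : IsCompact (Set.univ.pi fun i => Set.Icc (-(B i)) (B i)) :=
    isCompact_univ_pi fun i => isCompact_Icc
  have hmem : ∀ n, f n ∈ Set.univ.pi fun i => Set.Icc (-(B i)) (B i) := by
    intro n i _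
    exact abs_le.1 (hf n i)
  obtain ⟨g, -, σ, hσ, hconv⟩ := hcomp.tendsto_subseq hmem
  refine ⟨σ, hσ, g, fun i => ?_⟩
  exact (tendsto_pi_nhds.1 hconv) i



lemma bab_riesz {E : Type*} [NormedAddCommGroup E] [InnerProductSpace ℝ E]
    (H : Submodule ℝ E) [CompleteSpace H] (F : E → ℝ) (C : ℝ)
    (hadd : ∀ y ∈ H, ∀ z ∈ H, F (y + z) = F y + F z)
    (hsmul : ∀ (c : ℝ), ∀ y ∈ H, F (c • y) = c * F y)
    (hbd : ∀ y ∈ H, |F y| ≤ C * ‖y‖) :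
    ∃ w ∈ H, ∀ y ∈ H, ⟪w, y⟫_ℝ = F y := by
  let ℓ : H →ₗ[ℝ] ℝ :=
    { toFun := fun y => F ↑y
      map_add' := fun y z => hadd _ y.2 _ z.2
      map_smul' := fun c y => hsmul c _ y.2 }
  let L : H →L[ℝ] ℝ := ℓ.mkContinuous C (fun y => by
    simpa [ℓ, Real.norm_eq_abs] using hbd _ y.2)
  refine ⟨((InnerProductSpace.toDual ℝ H).symm L : E), SetLike.coe_mem _, ?_⟩
  intro y hy
  have h := InnerProductSpace.toDual_symm_apply (𝕜 := ℝ) (E := H) (y := L) (x := ⟨y, hy⟩)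
  rw [Submodule.coe_inner] at h
  exact h

lemma bab_tendsto_inner_of_dense {E : Type*} [NormedAddCommGroup E] [InnerProductSpace ℝ E]
    {x : ℕ → E} {ξ : E} {Bd : ℝ} (hB : ∀ n, ‖x n‖ ≤ Bd)
    {y : E} (e : ℕ → E)
    (he : ∀ i, Tendsto (fun n => ⟪x n, e i⟫_ℝ) atTop (𝓝 (⟪ξ, e i⟫_ℝ)))
    (hy : ∀ δ > (0:ℝ), ∃ i, ‖y - e i‖ < δ) :
    Tendsto (fun n => ⟪x n, y⟫_ℝ) atTop (𝓝 (⟪ξ, y⟫_ℝ)) := by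
  have hBd0 : 0 ≤ Bd := le_trans (norm_nonneg (x 0)) (hB 0)
  rw [Metric.tendsto_atTop]
  intro δ hδ
  have hpos : (0:ℝ) < 2 * (Bd + ‖ξ‖ + 1) := by positivity
  obtain ⟨i, hi⟩ := hy (δ / (2 * (Bd + ‖ξ‖ + 1))) (by positivity)
  have h2 := (Metric.tendsto_atTop.1 (he i)) (δ/2) (by linarith)
  obtain ⟨N, hN⟩ := h2
  refine ⟨N, fun n hn => ?_⟩
  have hN' := hN n hn
  rw [Real.dist_eq] at hN' ⊢
  have key : ⟪x n, y⟫_ℝ - ⟪ξ, y⟫_ℝ =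
      ⟪x n, y - e i⟫_ℝ + (⟪x n, e i⟫_ℝ - ⟪ξ, e i⟫_ℝ) + ⟪ξ, e i - y⟫_ℝ := by
    rw [inner_sub_right, inner_sub_right]; ring
  rw [key]
  have b1 : |⟪x n, y - e i⟫_ℝ| ≤ Bd * ‖y - e i‖ := by
    refine (abs_real_inner_le_norm _ _).trans ?_
    exact mul_le_mul_of_nonneg_right (hB n) (norm_nonneg _)
  have b3 : |⟪ξ, e i - y⟫_ℝ| ≤ ‖ξ‖ * ‖y - e i‖ := by
    refine (abs_real_inner_le_norm _ _).trans ?_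
    rw [norm_sub_rev]
  have hyb : ‖y - e i‖ ≤ δ / (2 * (Bd + ‖ξ‖ + 1)) := le_of_lt hi
  have b1' : |⟪x n, y - e i⟫_ℝ| + |⟪ξ, e i - y⟫_ℝ| ≤ (Bd + ‖ξ‖) * (δ / (2 * (Bd + ‖ξ‖ + 1))) := by
    have := add_le_add b1 b3
    refine this.trans ?_
    rw [← add_mul]
    exact mul_le_mul_of_nonneg_left hyb (by positivity)
  have hfrac : (Bd + ‖ξ‖) * (δ / (2 * (Bd + ‖ξ‖ + 1))) < δ/2 := by
    rw [div_eq_mul_inv, ← mul_assoc]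
    rw [show δ/2 = (Bd + ‖ξ‖ + 1) * δ * (2 * (Bd + ‖ξ‖ + 1))⁻¹ by
      field_simp]
    apply mul_lt_mul_of_pos_right _ (by positivity)
    have : Bd + ‖ξ‖ < Bd + ‖ξ‖ + 1 := by linarith
    calc (Bd + ‖ξ‖) * δ < (Bd + ‖ξ‖ + 1) * δ := by
          exact mul_lt_mul_of_pos_right this hδ
      _ = (Bd + ‖ξ‖ + 1) * δ := rfl
  calc |⟪x n, y - e i⟫_ℝ + (⟪x n, e i⟫_ℝ - ⟪ξ, e i⟫_ℝ) + ⟪ξ, e i - y⟫_ℝ|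
      ≤ |⟪x n, y - e i⟫_ℝ| + |⟪x n, e i⟫_ℝ - ⟪ξ, e i⟫_ℝ| + |⟪ξ, e i - y⟫_ℝ| := by
        exact (abs_add_le _ _).trans (by gcongr; exact abs_add_le _ _)
    _ < δ := by linarith

set_option maxHeartbeats 2000000 in
/-- Babillot's Lemma 1: for a measure-preserving flow `(T_t)` on a finite
measure space and a real `φ ∈ L²` with `∫ φ dm = 0`, if there is a sequence `t_n → ∞` with
`φ ∘ T_{t_n}` not converging weakly to `0` in `L²`, then there is a sequence `s_n → ∞` and a
non-constant `χ ∈ L²` with `φ ∘ T_{s_n} ⇀ χ` and `φ ∘ T_{-s_n} ⇀ χ` weakly in `L²`. -/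
theorem babillot_weak_limit
    {X : Type*} [MeasurableSpace X] (m : Measure X) [IsFiniteMeasure m]
    (T : ℝ → X → X)
    (hTmp : ∀ t, MeasurePreserving (T t) m m)
    (hflow : ∀ s t x, T (s + t) x = T s (T t x))
    (hT0 : ∀ x, T 0 x = x)
    (φ : X → ℝ) (hφ : MemLp φ 2 m) (hzero : ∫ x, φ x ∂m = 0)
    (t : ℕ → ℝ) (ht : Tendsto t atTop atTop)
    (hnot : ¬ ∀ ψ : X → ℝ, MemLp ψ 2 m →
      Tendsto (fun n => ∫ x, φ (T (t n) x) * ψ x ∂m) atTop (nhds 0)) :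
    ∃ s : ℕ → ℝ, Tendsto s atTop atTop ∧
      ∃ χ : X → ℝ, MemLp χ 2 m ∧ (¬ ∃ c : ℝ, χ =ᵐ[m] fun _ => c) ∧
        ∀ ψ : X → ℝ, MemLp ψ 2 m →
          Tendsto (fun n => ∫ x, φ (T (s n) x) * ψ x ∂m) atTop
            (nhds (∫ x, χ x * ψ x ∂m)) ∧
          Tendsto (fun n => ∫ x, φ (T (-(s n)) x) * ψ x ∂m) atTop
            (nhds (∫ x, χ x * ψ x ∂m)) := by
  classical
  -- Koopman operators on L²
  set Φ : Lp ℝ 2 m := hφ.toLp φ with hΦdef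
  let U : ℝ → (Lp ℝ 2 m →ₗᵢ[ℝ] Lp ℝ 2 m) :=
    fun u => Lp.compMeasurePreservingₗᵢ (𝕜 := ℝ) (T u) (hTmp u)
  have hUcoe : ∀ (u : ℝ) (f : Lp ℝ 2 m), (U u f : X → ℝ) =ᵐ[m] fun x => f (T u x) :=
    fun u f => Lp.coeFn_compMeasurePreserving f (hTmp u)
  have hUnorm : ∀ (u : ℝ) (f : Lp ℝ 2 m), ‖U u f‖ = ‖f‖ := fun u f => (U u).norm_map f
  have hUgroup : ∀ (u v : ℝ) (f : Lp ℝ 2 m), U u (U v f) = U (v + u) f := by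
    intro u v f
    refine Lp.ext ?_
    have h1 : (U u (U v f) : X → ℝ) =ᵐ[m] fun x => (U v f) (T u x) := hUcoe u (U v f)
    have h2 : ((U v f : X → ℝ) ∘ T u) =ᵐ[m] ((fun x => f (T v x)) ∘ T u) :=
      (hTmp u).quasiMeasurePreserving.ae_eq_comp (hUcoe v f)
    have h3 : ((fun x => f (T v x)) ∘ T u) = fun x => f (T (v + u) x) := by
      funext x; simp only [Function.comp_apply]; rw [hflow v u x]
    exact h1.trans ((h3 ▸ h2).trans (hUcoe (v + u) f).symm)
  have hU0 : ∀ f : Lp ℝ 2 m, U 0 f = f := by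
    intro f
    refine Lp.ext ((hUcoe 0 f).trans ?_)
    have : (fun x => f (T 0 x)) = fun x => f x := by
      funext x; rw [hT0 x]
    rw [this]
  -- inner product as integral
  have hinner : ∀ f g : Lp ℝ 2 m, ⟪f, g⟫_ℝ = ∫ x, f x * g x ∂m := by
    intro f g
    rw [L2.inner_def]
    congr 1
    funext x; exact Real.inner_apply _ _
  have hUinner : ∀ (u : ℝ) (f g : Lp ℝ 2 m), ⟪U u f, U u g⟫_ℝ = ⟪f, g⟫_ℝ := by
    intro u f g
    rw [hinner, hinner]
    have h1 : (fun x => (U u f) x * (U u g) x) =ᵐ[m] fun x => f (T u x) * g (T u x) :=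
      (hUcoe u f).mul (hUcoe u g)
    rw [integral_congr_ae h1]
    have h2 : AEStronglyMeasurable (fun y => f y * g y) (Measure.map (T u) m) := by
      rw [(hTmp u).map_eq]
      exact (Lp.aestronglyMeasurable f).mul (Lp.aestronglyMeasurable g)
    calc ∫ x, f (T u x) * g (T u x) ∂m
        = ∫ y, f y * g y ∂(Measure.map (T u) m) :=
          (integral_map (hTmp u).measurable.aemeasurable h2).symm
      _ = ∫ y, f y * g y ∂m := by rw [(hTmp u).map_eq]
  -- translation between the statement's integrals and inner products
  have hint : ∀ (u : ℝ) (ψ : X → ℝ) (hψ : MemLp ψ 2 m),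
      ∫ x, φ (T u x) * ψ x ∂m = ⟪U u Φ, hψ.toLp ψ⟫_ℝ := by
    intro u ψ hψ
    rw [hinner]
    refine (integral_congr_ae ?_).symm
    have h1 : (U u Φ : X → ℝ) =ᵐ[m] fun x => φ (T u x) := by
      refine (hUcoe u Φ).trans ?_
      have := (hTmp u).quasiMeasurePreserving.ae_eq_comp (hφ.coeFn_toLp)
      exact this
    exact h1.mul (hψ.coeFn_toLp)
  -- Step 1: extract a test function and ε > 0 witnessing non-convergence
  push_neg at hnot
  obtain ⟨ψ₀, hψ₀, hnt⟩ := hnot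
  set Ψ₀ : Lp ℝ 2 m := hψ₀.toLp ψ₀ with hΨ₀def
  have hnt' : ¬ Tendsto (fun n => ⟪U (t n) Φ, Ψ₀⟫_ℝ) atTop (𝓝 0) := by
    have heq : (fun n => ∫ x, φ (T (t n) x) * ψ₀ x ∂m) = fun n => ⟪U (t n) Φ, Ψ₀⟫_ℝ :=
      funext fun n => hint (t n) ψ₀ hψ₀
    rw [← heq]; exact hnt
  obtain ⟨ε, hε, hfreq⟩ : ∃ ε > (0:ℝ), ∃ᶠ n in atTop, ε ≤ |⟪U (t n) Φ, Ψ₀⟫_ℝ| := by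
    by_contra hcon
    push_neg at hcon
    refine hnt' (Metric.tendsto_nhds.2 fun δ hδ => ?_)
    have h2 : ∀ᶠ n in atTop, ¬ δ ≤ |⟪U (t n) Φ, Ψ₀⟫_ℝ| :=
      (hcon δ hδ).mono fun n hn => not_le.2 hn
    filter_upwards [h2] with n hn
    rw [Real.dist_eq, sub_zero]
    exact lt_of_not_ge hn
  obtain ⟨k, hkmono, hk⟩ := Filter.extraction_of_frequently_atTop hfreq
  set t1 : ℕ → ℝ := t ∘ k with ht1def
  have ht1 : Tendsto t1 atTop atTop := ht.comp hkmono.tendsto_atTop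
  -- countable subgroup generated by the times
  set Q : AddSubgroup ℝ := AddSubgroup.closure (Set.range t1) with hQdef
  have hQcount : ((Q : AddSubgroup ℝ) : Set ℝ).Countable :=
    bab_countable_closure (Set.countable_range t1)
  have hQt1 : ∀ n, t1 n ∈ Q := fun n => AddSubgroup.subset_closure ⟨n, rfl⟩
  -- the separable invariant subspace
  set C : Set (Lp ℝ 2 m) := (fun q : ℝ => U q Φ) '' (Q : Set ℝ) with hCdef
  have hCcount : C.Countable := hQcount.image _
  set H₀ : Submodule ℝ (Lp ℝ 2 m) := (Submodule.span ℝ C).topologicalClosure with hH₀def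
  have hH₀closed : IsClosed (H₀ : Set (Lp ℝ 2 m)) := Submodule.isClosed_topologicalClosure _
  haveI : CompleteSpace H₀ := hH₀closed.completeSpace_coe
  have hCsub : ∀ r ∈ Q, U r Φ ∈ H₀ := fun r hr =>
    Submodule.le_topologicalClosure _ (Submodule.subset_span ⟨r, hr, rfl⟩)
  have hΦmem : Φ ∈ H₀ := by
    have := hCsub 0 Q.zero_mem
    rwa [hU0 Φ] at this
  have hinv : ∀ q ∈ Q, ∀ x ∈ H₀, U q x ∈ H₀ := by
    intro q hq x hx
    have hle : Submodule.span ℝ C ≤ H₀.comap (U q).toLinearMap := by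
      rw [Submodule.span_le]
      rintro _ ⟨r, hr, rfl⟩
      show U q (U r Φ) ∈ H₀
      rw [hUgroup]
      exact hCsub (r + q) (Q.add_mem hr hq)
    have hclosed : IsClosed (H₀.comap (U q).toLinearMap : Set (Lp ℝ 2 m)) :=
      hH₀closed.preimage (U q).continuous
    exact Submodule.topologicalClosure_minimal _ hle hclosed hx
  -- separability and a dense sequence in H₀
  have hsep : IsSeparable (H₀ : Set (Lp ℝ 2 m)) := by
    have h1 : IsSeparable ((Submodule.span ℝ C : Submodule ℝ (Lp ℝ 2 m)) : Set (Lp ℝ 2 m)) :=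
      (hCcount.isSeparable).span
    have h2 : (H₀ : Set (Lp ℝ 2 m)) =
        closure ((Submodule.span ℝ C : Submodule ℝ (Lp ℝ 2 m)) : Set (Lp ℝ 2 m)) := rfl
    rw [h2]
    exact h1.closure
  haveI : SeparableSpace (H₀ : Set (Lp ℝ 2 m)) := hsep.separableSpace
  haveI : Nonempty (H₀ : Set (Lp ℝ 2 m)) := ⟨⟨0, H₀.zero_mem⟩⟩
  obtain ⟨eseq, heseq⟩ := TopologicalSpace.exists_dense_seq (H₀ : Set (Lp ℝ 2 m))
  set e : ℕ → Lp ℝ 2 m := fun i => (eseq i : Lp ℝ 2 m) with hedef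
  have he_mem : ∀ i, e i ∈ H₀ := fun i => (eseq i).2
  have he_dense : ∀ x ∈ H₀, ∀ δ > (0:ℝ), ∃ i, ‖x - e i‖ < δ := by
    intro x hx δ hδ
    obtain ⟨i, hi⟩ := Metric.denseRange_iff.mp heseq ⟨x, hx⟩ δ hδ
    refine ⟨i, ?_⟩
    rw [Subtype.dist_eq, dist_eq_norm] at hi
    exact hi
  -- diagonal extraction of weak limits
  set fseq : ℕ → Option (ℕ × ℕ) → ℝ := fun n p =>
    match p with
    | none => ⟪U (t1 n) Φ, Ψ₀⟫_ℝ
    | some (i, j) => ⟪U (t1 n) (e i), e j⟫_ℝ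
    with hfseqdef
  set Bp : Option (ℕ × ℕ) → ℝ := fun p =>
    match p with
    | none => ‖Φ‖ * ‖Ψ₀‖
    | some (i, j) => ‖e i‖ * ‖e j‖
    with hBpdef
  have hbd : ∀ n p, |fseq n p| ≤ Bp p := by
    intro n p
    match p with
    | none =>
      refine (abs_real_inner_le_norm _ _).trans ?_
      rw [hUnorm]
    | some (i, j) =>
      refine (abs_real_inner_le_norm _ _).trans ?_
      rw [hUnorm]
  obtain ⟨σ, hσmono, g, hg⟩ := bab_exists_subseq_forall_tendsto fseq Bp hbd
  set s : ℕ → ℝ := fun n => t1 (σ n) with hsdef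
  have hs_tendsto : Tendsto s atTop atTop := ht1.comp hσmono.tendsto_atTop
  have hsQ : ∀ n, s n ∈ Q := fun n => hQt1 _
  have hgnone : Tendsto (fun n => ⟪U (s n) Φ, Ψ₀⟫_ℝ) atTop (𝓝 (g none)) := hg none
  have hpair : ∀ i j, Tendsto (fun n => ⟪U (s n) (e i), e j⟫_ℝ) atTop (𝓝 (g (some (i, j)))) :=
    fun i j => hg (some (i, j))
  have hgnone_ge : ε ≤ |g none| := by
    refine ge_of_tendsto' hgnone.abs fun n => ?_
    exact hk (σ n)
  -- weak limits exist against all pairs in H₀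
  have hCauchy : ∀ x ∈ H₀, ∀ y ∈ H₀, CauchySeq (fun n => ⟪U (s n) x, y⟫_ℝ) := by
    intro x hx y hy
    apply bab_cauchySeq_of_approx
    intro δ hδ
    have hpos : (0:ℝ) < 2 * (‖x‖ + ‖y‖ + 1) := by positivity
    set δ' : ℝ := min 1 (δ / (2 * (‖x‖ + ‖y‖ + 1))) with hδ'def
    have hδ'pos : 0 < δ' := lt_min one_pos (by positivity)
    obtain ⟨i, hi⟩ := he_dense x hx δ' hδ'pos
    obtain ⟨j, hj⟩ := he_dense y hy δ' hδ'pos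
    refine ⟨fun n => ⟪U (s n) (e i), e j⟫_ℝ, (hpair i j).cauchySeq, fun n => ?_⟩
    have hdecomp : ⟪U (s n) x, y⟫_ℝ - ⟪U (s n) (e i), e j⟫_ℝ =
        ⟪U (s n) x - U (s n) (e i), y⟫_ℝ + ⟪U (s n) (e i), y - e j⟫_ℝ := by
      rw [inner_sub_left, inner_sub_right]; ring
    rw [hdecomp]
    have b1 : |⟪U (s n) x - U (s n) (e i), y⟫_ℝ| ≤ δ' * ‖y‖ := by
      refine (abs_real_inner_le_norm _ _).trans ?_
      have : ‖U (s n) x - U (s n) (e i)‖ = ‖x - e i‖ := by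
        rw [← map_sub, hUnorm]
      rw [this]
      exact mul_le_mul_of_nonneg_right hi.le (norm_nonneg _)
    have b2 : |⟪U (s n) (e i), y - e j⟫_ℝ| ≤ (‖x‖ + 1) * δ' := by
      refine (abs_real_inner_le_norm _ _).trans ?_
      have h1 : ‖U (s n) (e i)‖ ≤ ‖x‖ + 1 := by
        rw [hUnorm]
        have : ‖e i‖ ≤ ‖x‖ + ‖x - e i‖ := by
          have h0 : ‖e i‖ - ‖x‖ ≤ ‖e i - x‖ := norm_sub_norm_le _ _
          rw [norm_sub_rev] at h0
          linarith
        have hδ'le1 : δ' ≤ 1 := min_le_left _ _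
        linarith
      exact mul_le_mul h1 hj.le (norm_nonneg _) (by positivity)
    have hδ'le : δ' ≤ δ / (2 * (‖x‖ + ‖y‖ + 1)) := min_le_right _ _
    calc |⟪U (s n) x - U (s n) (e i), y⟫_ℝ + ⟪U (s n) (e i), y - e j⟫_ℝ|
        ≤ |⟪U (s n) x - U (s n) (e i), y⟫_ℝ| + |⟪U (s n) (e i), y - e j⟫_ℝ| := abs_add_le _ _
      _ ≤ δ' * ‖y‖ + (‖x‖ + 1) * δ' := add_le_add b1 b2
      _ = δ' * (‖x‖ + ‖y‖ + 1) := by ring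
      _ ≤ (δ / (2 * (‖x‖ + ‖y‖ + 1))) * (‖x‖ + ‖y‖ + 1) := by
          exact mul_le_mul_of_nonneg_right hδ'le (by positivity)
      _ = δ / 2 := by field_simp
      _ ≤ δ := by linarith
  set a : Lp ℝ 2 m → Lp ℝ 2 m → ℝ :=
    fun x y => limUnder atTop (fun n => ⟪U (s n) x, y⟫_ℝ) with hadef
  have ha : ∀ x ∈ H₀, ∀ y ∈ H₀,
      Tendsto (fun n => ⟪U (s n) x, y⟫_ℝ) atTop (𝓝 (a x y)) :=
    fun x hx y hy => (hCauchy x hx y hy).tendsto_limUnder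
  have habd : ∀ x ∈ H₀, ∀ y ∈ H₀, |a x y| ≤ ‖x‖ * ‖y‖ := by
    intro x hx y hy
    have h1 : Tendsto (fun n => |⟪U (s n) x, y⟫_ℝ|) atTop (𝓝 |a x y|) := (ha x hx y hy).abs
    refine le_of_tendsto h1 (Filter.Eventually.of_forall fun n => ?_)
    refine (abs_real_inner_le_norm _ _).trans ?_
    rw [hUnorm]
  -- bilinearity of a on H₀
  have ha_addR : ∀ x ∈ H₀, ∀ y ∈ H₀, ∀ z ∈ H₀, a x (y + z) = a x y + a x z := by
    intro x hx y hy z hz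
    refine tendsto_nhds_unique (ha x hx _ (H₀.add_mem hy hz)) ?_
    have := (ha x hx y hy).add (ha x hx z hz)
    refine this.congr fun n => ?_
    rw [inner_add_right]
  have ha_smulR : ∀ (c : ℝ), ∀ x ∈ H₀, ∀ y ∈ H₀, a x (c • y) = c * a x y := by
    intro c x hx y hy
    refine tendsto_nhds_unique (ha x hx _ (H₀.smul_mem c hy)) ?_
    have := (ha x hx y hy).const_mul c
    refine this.congr fun n => ?_
    rw [real_inner_smul_right]
  have ha_addL : ∀ x ∈ H₀, ∀ y ∈ H₀, ∀ z ∈ H₀, a (x + y) z = a x z + a y z := by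
    intro x hx y hy z hz
    refine tendsto_nhds_unique (ha _ (H₀.add_mem hx hy) z hz) ?_
    have := (ha x hx z hz).add (ha y hy z hz)
    refine this.congr fun n => ?_
    rw [map_add, inner_add_left]
  have ha_smulL : ∀ (c : ℝ), ∀ x ∈ H₀, ∀ y ∈ H₀, a (c • x) y = c * a x y := by
    intro c x hx y hy
    refine tendsto_nhds_unique (ha _ (H₀.smul_mem c hx) y hy) ?_
    have := (ha x hx y hy).const_mul c
    refine this.congr fun n => ?_
    rw [(U (s n)).map_smul, real_inner_smul_left]
  -- Riesz representations
  obtain ⟨χ₀, hχ₀mem, hχ₀spec⟩ : ∃ w ∈ H₀, ∀ y ∈ H₀, ⟪w, y⟫_ℝ = a Φ y :=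
    bab_riesz H₀ (a Φ) ‖Φ‖ (fun y hy z hz => ha_addR Φ hΦmem y hy z hz)
      (fun c y hy => ha_smulR c Φ hΦmem y hy) (fun y hy => habd Φ hΦmem y hy)
  have hAe : ∀ i : ℕ, ∃ w ∈ H₀, ∀ y ∈ H₀, ⟪w, y⟫_ℝ = a (e i) y := fun i =>
    bab_riesz H₀ (a (e i)) ‖e i‖ (fun y hy z hz => ha_addR _ (he_mem i) y hy z hz)
      (fun c y hy => ha_smulR c _ (he_mem i) y hy) (fun y hy => habd _ (he_mem i) y hy)
  choose A hAmem hAspec using hAe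
  obtain ⟨χv, hχmem, hχspec⟩ : ∃ w ∈ H₀, ∀ y ∈ H₀, ⟪w, y⟫_ℝ = a y χ₀ :=
    bab_riesz H₀ (fun y => a y χ₀) ‖χ₀‖
      (fun y hy z hz => ha_addL y hy z hz χ₀ hχ₀mem)
      (fun c y hy => ha_smulL c y hy χ₀ hχ₀mem)
      (fun y hy => by rw [mul_comm]; exact habd y hy χ₀ hχ₀mem)
  -- orthogonal projection reduction
  have hP : ∀ v ∈ H₀, ∀ ψ : Lp ℝ 2 m,
      ⟪v, ψ⟫_ℝ = ⟪v, ((Submodule.orthogonalProjectionOnto H₀ ψ : H₀) : Lp ℝ 2 m)⟫_ℝ := by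
    intro v hv ψ
    have h := Submodule.starProjection_inner_eq_zero (K := H₀) ψ v hv
    have h2 : ⟪v, ψ - ((Submodule.orthogonalProjectionOnto H₀ ψ : H₀) : Lp ℝ 2 m)⟫_ℝ = 0 := by
      rw [real_inner_comm]; exact h
    rw [inner_sub_right] at h2
    linarith
  -- χ₀ is nonzero
  have hUsΦmem : ∀ n, U (s n) Φ ∈ H₀ := fun n => hCsub _ (hsQ n)
  have hanonzero : a Φ ((Submodule.orthogonalProjectionOnto H₀ Ψ₀ : H₀) : Lp ℝ 2 m) = g none := by
    refine tendsto_nhds_unique (ha Φ hΦmem _ (SetLike.coe_mem _)) ?_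
    refine hgnone.congr fun n => ?_
    exact (hP _ (hUsΦmem n) Ψ₀)
  have hχ₀ne : χ₀ ≠ 0 := by
    intro hzero'
    have h1 : ⟪χ₀, ((Submodule.orthogonalProjectionOnto H₀ Ψ₀ : H₀) : Lp ℝ 2 m)⟫_ℝ = g none := by
      rw [hχ₀spec _ (SetLike.coe_mem _)]; exact hanonzero
    rw [hzero', inner_zero_left] at h1
    rw [← h1] at hgnone_ge
    simp at hgnone_ge
    linarith
  have hχ₀pos : 0 < ⟪χ₀, χ₀⟫_ℝ := by
    rcases lt_or_eq_of_le (real_inner_self_nonneg (x := χ₀)) with h | h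
    · exact h
    · exact absurd ((@inner_self_eq_zero ℝ _ _ _ _ χ₀).1 h.symm) hχ₀ne
  -- the key positivity: ⟪χv, Φ⟫ = ‖χ₀‖²
  have hχvΦ : ⟪χv, Φ⟫_ℝ = ⟪χ₀, χ₀⟫_ℝ := by
    rw [hχspec Φ hΦmem, hχ₀spec χ₀ hχ₀mem]
  -- inner-limit identities
  have hL1 : ∀ n i : ℕ, Tendsto (fun M => ⟪U (s M - s n) Φ, e i⟫_ℝ) atTop
      (𝓝 (⟪χ₀, U (s n) (e i)⟫_ℝ)) := by
    intro n i
    have hmem' : U (s n) (e i) ∈ H₀ := hinv _ (hsQ n) _ (he_mem i)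
    have key : ∀ M, ⟪U (s M - s n) Φ, e i⟫_ℝ = ⟪U (s M) Φ, U (s n) (e i)⟫_ℝ := by
      intro M
      rw [← hUinner (s n) (U (s M - s n) Φ) (e i), hUgroup, sub_add_cancel]
    have h1 := ha Φ hΦmem _ hmem'
    rw [show a Φ (U (s n) (e i)) = ⟪χ₀, U (s n) (e i)⟫_ℝ from (hχ₀spec _ hmem').symm] at h1
    exact h1.congr fun M => (key M).symm
  have hL2 : ∀ n i : ℕ, Tendsto (fun M => ⟪U (s n - s M) Φ, e i⟫_ℝ) atTop
      (𝓝 (⟪A i, U (s n) Φ⟫_ℝ)) := by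
    intro n i
    have key : ∀ M, ⟪U (s n - s M) Φ, e i⟫_ℝ = ⟪U (s M) (e i), U (s n) Φ⟫_ℝ := by
      intro M
      rw [← hUinner (s M) (U (s n - s M) Φ) (e i), hUgroup, sub_add_cancel]
      exact real_inner_comm _ _
    have h1 := ha _ (he_mem i) _ (hUsΦmem n)
    rw [show a (e i) (U (s n) Φ) = ⟪A i, U (s n) Φ⟫_ℝ from (hAspec i _ (hUsΦmem n)).symm] at h1
    exact h1.congr fun M => (key M).symm
  -- outer-limit identities
  have hO1 : ∀ i : ℕ, Tendsto (fun n => ⟪χ₀, U (s n) (e i)⟫_ℝ) atTop (𝓝 (⟪χv, e i⟫_ℝ)) := by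
    intro i
    have h1 := ha _ (he_mem i) χ₀ hχ₀mem
    rw [show a (e i) χ₀ = ⟪χv, e i⟫_ℝ from (hχspec _ (he_mem i)).symm] at h1
    exact h1.congr fun n => real_inner_comm _ _
  have hO2 : ∀ i : ℕ, Tendsto (fun n => ⟪A i, U (s n) Φ⟫_ℝ) atTop (𝓝 (⟪χv, e i⟫_ℝ)) := by
    intro i
    have h1 := ha Φ hΦmem _ (hAmem i)
    have heq : a Φ (A i) = ⟪χv, e i⟫_ℝ := by
      rw [← hχ₀spec _ (hAmem i)]
      rw [real_inner_comm, hAspec i χ₀ hχ₀mem, ← hχspec _ (he_mem i)]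
    rw [heq] at h1
    exact h1.congr fun n => real_inner_comm _ _
  -- diagonal choice of the final sequence
  have hstage : ∀ n : ℕ, ∃ M : ℕ, ((n : ℝ) ≤ s M - s n ∧ ∀ i, i ≤ n →
      (|⟪U (s M - s n) Φ, e i⟫_ℝ - ⟪χ₀, U (s n) (e i)⟫_ℝ| ≤ 1 / (n + 1) ∧
       |⟪U (s n - s M) Φ, e i⟫_ℝ - ⟪A i, U (s n) Φ⟫_ℝ| ≤ 1 / (n + 1))) := by
    intro n
    have hpos : (0:ℝ) < 1 / ((n : ℝ) + 1) := by positivity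
    have hev : ∀ {fM : ℕ → ℝ} {L : ℝ}, Tendsto fM atTop (𝓝 L) →
        ∀ᶠ M in atTop, |fM M - L| ≤ 1 / ((n : ℝ) + 1) := by
      intro fM L hfM
      obtain ⟨N, hN⟩ := Metric.tendsto_atTop.1 hfM (1 / ((n : ℝ) + 1)) hpos
      exact eventually_atTop.2 ⟨N, fun M hM => by
        rw [← Real.dist_eq]; exact (hN M hM).le⟩
    have h1 : ∀ᶠ M in atTop, (n : ℝ) ≤ s M - s n := by
      filter_upwards [hs_tendsto.eventually_ge_atTop ((n : ℝ) + s n)] with M hM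
      linarith
    have h2 : ∀ᶠ M in atTop, ∀ i ∈ Finset.range (n + 1),
        (|⟪U (s M - s n) Φ, e i⟫_ℝ - ⟪χ₀, U (s n) (e i)⟫_ℝ| ≤ 1 / ((n : ℝ) + 1) ∧
         |⟪U (s n - s M) Φ, e i⟫_ℝ - ⟪A i, U (s n) Φ⟫_ℝ| ≤ 1 / ((n : ℝ) + 1)) := by
      rw [Filter.eventually_all_finset]
      intro i _
      exact (hev (hL1 n i)).and (hev (hL2 n i))
    obtain ⟨M, hMa, hMb⟩ := (h1.and h2).exists
    exact ⟨M, hMa, fun i hi => hMb i (Finset.mem_range_succ_iff.2 hi)⟩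
  choose M hM1 hM2 using hstage
  set w : ℕ → ℝ := fun n => s (M n) - s n with hwdef
  have hwQ : ∀ n, w n ∈ Q := fun n => Q.sub_mem (hsQ _) (hsQ _)
  have hw_tendsto : Tendsto w atTop atTop :=
    tendsto_atTop_mono hM1 tendsto_natCast_atTop_atTop
  -- convergence against the dense family
  have habs_conv : ∀ (fn : ℕ → ℝ) (tg : ℕ → ℝ) (L : ℝ),
      (∀ᶠ n in atTop, |fn n - tg n| ≤ 1 / ((n : ℝ) + 1)) →
      Tendsto tg atTop (𝓝 L) → Tendsto fn atTop (𝓝 L) := by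
    intro fn tg L hb htg
    have hdiff : Tendsto (fun n => fn n - L) atTop (𝓝 0) := by
      apply squeeze_zero_norm' (a := fun n : ℕ => 1 / ((n : ℝ) + 1) + |tg n - L|)
      · filter_upwards [hb] with n hn
        rw [Real.norm_eq_abs]
        calc |fn n - L| ≤ |fn n - tg n| + |tg n - L| := by
              have : fn n - L = (fn n - tg n) + (tg n - L) := by ring
              rw [this]; exact abs_add_le _ _
          _ ≤ 1 / ((n : ℝ) + 1) + |tg n - L| := by gcongr
      · have t1 : Tendsto (fun n : ℕ => 1 / ((n : ℝ) + 1)) atTop (𝓝 0) :=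
          tendsto_one_div_add_atTop_nhds_zero_nat
        have t2 : Tendsto (fun n => |tg n - L|) atTop (𝓝 0) := by
          have := (htg.sub_const L).abs
          simpa using this
        simpa using t1.add t2
    have := hdiff.add_const L
    simpa using this
  have hconv_e : ∀ i, Tendsto (fun n => ⟪U (w n) Φ, e i⟫_ℝ) atTop (𝓝 (⟪χv, e i⟫_ℝ)) := by
    intro i
    refine habs_conv _ (fun n => ⟪χ₀, U (s n) (e i)⟫_ℝ) _ ?_ (hO1 i)
    filter_upwards [eventually_ge_atTop i] with n hn
    exact (hM2 n i hn).1
  have hconv_e_neg : ∀ i, Tendsto (fun n => ⟪U (-(w n)) Φ, e i⟫_ℝ) atTop (𝓝 (⟪χv, e i⟫_ℝ)) := by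
    intro i
    refine habs_conv _ (fun n => ⟪A i, U (s n) Φ⟫_ℝ) _ ?_ (hO2 i)
    filter_upwards [eventually_ge_atTop i] with n hn
    have := (hM2 n i hn).2
    rw [hwdef]
    simpa [neg_sub] using this
  -- extension to arbitrary test vectors
  have hext : ∀ ψ : Lp ℝ 2 m,
      Tendsto (fun n => ⟪U (w n) Φ, ψ⟫_ℝ) atTop (𝓝 (⟪χv, ψ⟫_ℝ)) ∧
      Tendsto (fun n => ⟪U (-(w n)) Φ, ψ⟫_ℝ) atTop (𝓝 (⟪χv, ψ⟫_ℝ)) := by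
    intro ψ
    set y : Lp ℝ 2 m := ((Submodule.orthogonalProjectionOnto H₀ ψ : H₀) : Lp ℝ 2 m) with hydef
    have hymem : y ∈ H₀ := SetLike.coe_mem _
    have hyd : ∀ δ > (0:ℝ), ∃ i, ‖y - e i‖ < δ := fun δ hδ => he_dense y hymem δ hδ
    have hχy : ⟪χv, ψ⟫_ℝ = ⟪χv, y⟫_ℝ := hP _ hχmem ψ
    constructor
    · have h1 : (fun n => ⟪U (w n) Φ, ψ⟫_ℝ) = fun n => ⟪U (w n) Φ, y⟫_ℝ :=
        funext fun n => hP _ (hCsub _ (hwQ n)) ψ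
      rw [h1, hχy]
      exact bab_tendsto_inner_of_dense (fun n => (hUnorm (w n) Φ).le) e hconv_e hyd
    · have h1 : (fun n => ⟪U (-(w n)) Φ, ψ⟫_ℝ) = fun n => ⟪U (-(w n)) Φ, y⟫_ℝ :=
        funext fun n => hP _ (hCsub _ (Q.neg_mem (hwQ n))) ψ
      rw [h1, hχy]
      exact bab_tendsto_inner_of_dense (fun n => (hUnorm (-(w n)) Φ).le) e hconv_e_neg hyd
  -- final assembly
  refine ⟨w, hw_tendsto, (χv : X → ℝ), Lp.memLp χv, ?_, ?_⟩
  · rintro ⟨c, hc⟩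
    have h1 : ⟪χv, Φ⟫_ℝ = ∫ x, (χv : X → ℝ) x * φ x ∂m := by
      rw [hinner]
      exact integral_congr_ae (EventuallyEq.rfl.mul hφ.coeFn_toLp)
    have h2 : ∫ x, (χv : X → ℝ) x * φ x ∂m = ∫ x, c * φ x ∂m :=
      integral_congr_ae (hc.mul EventuallyEq.rfl)
    have h3 : ⟪χv, Φ⟫_ℝ = 0 := by
      rw [h1, h2, integral_const_mul, hzero, mul_zero]
    rw [hχvΦ] at h3
    linarith
  · intro ψ hψ
    have hgoal : (∫ x, (χv : X → ℝ) x * ψ x ∂m) = ⟪χv, hψ.toLp ψ⟫_ℝ := by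
      rw [hinner]
      exact integral_congr_ae (EventuallyEq.rfl.mul (hψ.coeFn_toLp).symm)
    constructor
    · have heq : (fun n => ∫ x, φ (T (w n) x) * ψ x ∂m) =
          fun n => ⟪U (w n) Φ, hψ.toLp ψ⟫_ℝ := funext fun n => hint (w n) ψ hψ
      rw [heq, hgoal]
      exact (hext (hψ.toLp ψ)).1
    · have heq : (fun n => ∫ x, φ (T (-(w n)) x) * ψ x ∂m) =
          fun n => ⟪U (-(w n)) Φ, hψ.toLp ψ⟫_ℝ := funext fun n => hint (-(w n)) ψ hψ
      rw [heq, hgoal]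
      exact (hext (hψ.toLp ψ)).2
end
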